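/- Let X be coarsely connected with module H_X, B ⊆ Y measurable, and H ≤ χ_B(H_Y) a finite-dimensional subspace. Suppose ε > 0 is such that for every bounded measurable A ⊆ X there is a unit vector w ∈ χ_B(H_Y) with ‖(1 − χ_A) T* w‖ > ε. Then for every bounded measurable A there exists a unit vector w̄ ∈ χ_B(H_Y) ∩ H^⊥ with ‖(1 − χ_A) T* w̄‖ > ε/2. -/

import Mathlib

open ContinuousLinearMap

/-- Composition of relations. -/
def relComp {X Y Z : Type*} (S : Set (Z × Y)) (R : Set (Y × X)) : Set (Z × X) :=
  {p | ∃ y, (p.1, y) ∈ S ∧ (y, p.2) ∈ R}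

/-- Transposition of a relation. -/
def relOp {X Y : Type*} (R : Set (Y × X)) : Set (X × Y) := {p | (p.2, p.1) ∈ R}

/-- Image of a set under a relation: `R(A) = {y | ∃ x ∈ A, (y,x) ∈ R}`. -/
def relImage {X Y : Type*} (R : Set (Y × X)) (A : Set X) : Set Y :=
  {y | ∃ x ∈ A, (y, x) ∈ R}

/-- A coarse structure on a set `X`. -/
structure CoarseStructure (X : Type*) where
  ents : Set (Set (X × X))
  mem_of_subset : ∀ {E F : Set (X × X)}, E ∈ ents → F ⊆ E → F ∈ ents
  union_mem : ∀ {E F : Set (X × X)}, E ∈ ents → F ∈ ents → E ∪ F ∈ ents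
  diag_mem : {p : X × X | p.1 = p.2} ∈ ents
  op_mem : ∀ {E : Set (X × X)}, E ∈ ents → relOp E ∈ ents
  comp_mem : ∀ {E F : Set (X × X)}, E ∈ ents → F ∈ ents → relComp E F ∈ ents

/-- A coarse geometric module for a coarse space `(X, 𝓔)`: a Hilbert space `H` together with
a nondegenerate unital representation of a unital Boolean algebra of subsets of `X` by
orthogonal projections. -/
structure CoarseModule {X : Type*} (𝓔 : CoarseStructure X) (H : Type*)
    [NormedAddCommGroup H] [InnerProductSpace ℂ H] [CompleteSpace H] where
  meas : Set (Set X)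
  univ_mem : Set.univ ∈ meas
  inter_mem : ∀ {A B : Set X}, A ∈ meas → B ∈ meas → A ∩ B ∈ meas
  compl_mem : ∀ {A : Set X}, A ∈ meas → Aᶜ ∈ meas
  proj : Set X → H →L[ℂ] H
  proj_idem : ∀ A ∈ meas, IsIdempotentElem (proj A)
  proj_sa : ∀ A ∈ meas, IsSelfAdjoint (proj A)
  proj_inter : ∀ A ∈ meas, ∀ B ∈ meas, proj (A ∩ B) = (proj A).comp (proj B)
  proj_union : ∀ A ∈ meas, ∀ B ∈ meas, A ∩ B = ∅ → proj (A ∪ B) = proj A + proj B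
  proj_univ : proj Set.univ = 1
  nondegenerate : ∃ E ∈ 𝓔.ents, relOp E = E ∧ {p : X × X | p.1 = p.2} ⊆ E ∧
    (Submodule.span ℂ {v : H | ∃ A ∈ meas, A ×ˢ A ⊆ E ∧ v ∈ Set.range (proj A)}).topologicalClosure = ⊤

variable {X Y : Type*} {𝓔 : CoarseStructure X} {𝓕 : CoarseStructure Y}
  {HX HY : Type*}
  [NormedAddCommGroup HX] [InnerProductSpace ℂ HX] [CompleteSpace HX]
  [NormedAddCommGroup HY] [InnerProductSpace ℂ HY] [CompleteSpace HY]

/-- The support of an operator `t : H_X → H_Y` is contained in `S ⊆ Y × X` if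
`χ_B ∘ t ∘ χ_A = 0` for all measurable `A ⊆ X`, `B ⊆ Y` with `B ∩ S(A) = ∅`. -/
def SuppIn (MX : CoarseModule 𝓔 HX) (MY : CoarseModule 𝓕 HY)
    (t : HX →L[ℂ] HY) (S : Set (Y × X)) : Prop :=
  ∀ A ∈ MX.meas, ∀ B ∈ MY.meas, B ∩ relImage S A = ∅ →
    (MY.proj B).comp (t.comp (MX.proj A)) = 0

/-- A subset of a coarse space is bounded if it is `E`-bounded for some entourage `E`. -/
def IsBoundedSet {Z : Type*} (𝓖 : CoarseStructure Z) (A : Set Z) : Prop :=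
  ∃ E ∈ 𝓖.ents, A ×ˢ A ⊆ E

lemma aux_norm_le' {E : Type*} [NormedAddCommGroup E] [InnerProductSpace ℂ E]
    {x y : E} (h : (inner ℂ x x : ℂ) = inner ℂ y x) : ‖x‖ ≤ ‖y‖ := by
  have h2 : (‖x‖:ℝ)^2 = ‖(inner ℂ y x : ℂ)‖ := by
    rw [← h, inner_self_eq_norm_sq_to_K]; simp
  have h3 := norm_inner_le_norm (𝕜 := ℂ) y x
  nlinarith [norm_nonneg x, norm_nonneg y]

lemma proj_norm_le' (M : CoarseModule 𝓔 HX) {C : Set X} (hC : C ∈ M.meas) (v : HX) :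
    ‖M.proj C v‖ ≤ ‖v‖ := by
  have hidem := M.proj_idem C hC
  have hsa := M.proj_sa C hC
  apply aux_norm_le'
  have hadj : ContinuousLinearMap.adjoint (M.proj C) = M.proj C := hsa
  calc (inner ℂ (M.proj C v) (M.proj C v) : ℂ)
      = inner ℂ (ContinuousLinearMap.adjoint (M.proj C) v) (M.proj C v) := by rw [hadj]
    _ = inner ℂ v (M.proj C (M.proj C v)) := ContinuousLinearMap.adjoint_inner_left _ _ _
    _ = inner ℂ v (M.proj C v) := by
        congr 1
        calc M.proj C (M.proj C v) = (M.proj C * M.proj C) v := rfl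
          _ = M.proj C v := by rw [hidem]

lemma proj_compl' (M : CoarseModule 𝓔 HX) {C : Set X} (hC : C ∈ M.meas) :
    M.proj Cᶜ = 1 - M.proj C := by
  have h := M.proj_union C hC Cᶜ (M.compl_mem hC) (Set.inter_compl_self C)
  rw [Set.union_compl_self, M.proj_univ] at h
  exact eq_sub_of_add_eq' h.symm

lemma one_sub_proj_norm_le' (M : CoarseModule 𝓔 HX) {C : Set X} (hC : C ∈ M.meas) (v : HX) :
    ‖(1 - M.proj C) v‖ ≤ ‖v‖ := by
  rw [← proj_compl' M hC]
  exact proj_norm_le' M (M.compl_mem hC) v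

lemma proj_mono_norm' (M : CoarseModule 𝓔 HX) {A A' : Set X} (hA : A ∈ M.meas)
    (hA' : A' ∈ M.meas) (hsub : A ⊆ A') (v : HX) :
    ‖(1 - M.proj A') v‖ ≤ ‖(1 - M.proj A) v‖ := by
  have h1 : M.proj A' * M.proj A = M.proj A := by
    have h := M.proj_inter A' hA' A hA
    rw [Set.inter_eq_right.mpr hsub] at h
    exact h.symm
  have hfact : (1 - M.proj A') * (1 - M.proj A) = 1 - M.proj A' := by
    rw [mul_sub, mul_one, sub_mul, one_mul, h1]; abel
  calc ‖(1 - M.proj A') v‖ = ‖(1 - M.proj A') ((1 - M.proj A) v)‖ := by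
        rw [← ContinuousLinearMap.mul_apply, hfact]
    _ ≤ ‖(1 - M.proj A) v‖ := one_sub_proj_norm_le' M hA' _

lemma meas_union' (M : CoarseModule 𝓔 HX) {A B : Set X} (hA : A ∈ M.meas)
    (hB : B ∈ M.meas) : A ∪ B ∈ M.meas := by
  have := M.compl_mem (M.inter_mem (M.compl_mem hA) (M.compl_mem hB))
  rwa [Set.compl_inter, compl_compl, compl_compl] at this

lemma bounded_empty' : IsBoundedSet 𝓔 (∅ : Set X) :=
  ⟨_, 𝓔.diag_mem, by simp⟩

lemma bounded_union' (hconn : ∀ s : Set X, s.Finite → IsBoundedSet 𝓔 s)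
    {A B : Set X} (hA : IsBoundedSet 𝓔 A) (hB : IsBoundedSet 𝓔 B) :
    IsBoundedSet 𝓔 (A ∪ B) := by
  rcases A.eq_empty_or_nonempty with rfl | ⟨a, ha⟩
  · simpa using hB
  rcases B.eq_empty_or_nonempty with rfl | ⟨b, hb⟩
  · simpa using hA
  obtain ⟨E, hE, hAE⟩ := hA
  obtain ⟨F, hF, hBF⟩ := hB
  obtain ⟨G, hG, hGsub⟩ := hconn {a, b} ((Set.finite_singleton b).insert a)
  have hab : ({(a, b)} : Set (X × X)) ∈ 𝓔.ents := by
    apply 𝓔.mem_of_subset hG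
    intro p hp
    rw [Set.mem_singleton_iff] at hp
    subst hp
    exact hGsub ⟨by simp, by simp⟩
  have haA : (A ×ˢ {a} : Set (X × X)) ∈ 𝓔.ents :=
    𝓔.mem_of_subset hE (fun p hp => hAE ⟨hp.1, by rw [hp.2]; exact ha⟩)
  have hbB : (({b} : Set X) ×ˢ B : Set (X × X)) ∈ 𝓔.ents :=
    𝓔.mem_of_subset hF (fun p hp => hBF ⟨by have := hp.1; simp at this; rw [this]; exact hb, hp.2⟩)
  set E'' : Set (X × X) := relComp (A ×ˢ {a}) (relComp ({(a, b)} : Set (X × X)) (({b} : Set X) ×ˢ B))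
  have hE'' : E'' ∈ 𝓔.ents := 𝓔.comp_mem haA (𝓔.comp_mem hab hbB)
  have hcross : (A ×ˢ B : Set (X × X)) ⊆ E'' := by
    rintro ⟨x, y⟩ ⟨hx, hy⟩
    exact ⟨a, ⟨hx, rfl⟩, ⟨b, rfl, ⟨rfl, hy⟩⟩⟩
  refine ⟨E ∪ F ∪ E'' ∪ relOp E'', ?_, ?_⟩
  · exact 𝓔.union_mem (𝓔.union_mem (𝓔.union_mem hE hF) hE'') (𝓔.op_mem hE'')
  · rintro ⟨x, y⟩ ⟨hx, hy⟩
    rcases hx with hx | hx <;> rcases hy with hy | hy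
    · exact Or.inl (Or.inl (Or.inl (hAE ⟨hx, hy⟩)))
    · exact Or.inl (Or.inr (hcross ⟨hx, hy⟩))
    · exact Or.inr (hcross ⟨hy, hx⟩)
    · exact Or.inl (Or.inl (Or.inr (hBF ⟨hx, hy⟩)))

lemma proj_absorb' (M : CoarseModule 𝓔 HX) {A A' : Set X} (hA : A ∈ M.meas)
    (hA' : A' ∈ M.meas) (hsub : A ⊆ A') {v : HX} (hv : M.proj A v = v) :
    M.proj A' v = v := by
  conv_lhs => rw [← hv]
  rw [← ContinuousLinearMap.comp_apply, ← M.proj_inter A' hA' A hA,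
    Set.inter_eq_right.mpr hsub, hv]

lemma approx' (M : CoarseModule 𝓔 HX)
    (hconn : ∀ s : Set X, s.Finite → IsBoundedSet 𝓔 s)
    (x : HX) {δ : ℝ} (hδ : 0 < δ) :
    ∃ A ∈ M.meas, IsBoundedSet 𝓔 A ∧ ‖x - M.proj A x‖ < δ := by
  obtain ⟨E, hE, -, -, hdense⟩ := M.nondegenerate
  set S := {v : HX | ∃ A ∈ M.meas, A ×ˢ A ⊆ E ∧ v ∈ Set.range (M.proj A)}
  have hx : x ∈ closure (Submodule.span ℂ S : Set HX) := by
    have : x ∈ (Submodule.span ℂ S).topologicalClosure := by rw [hdense]; trivial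
    rw [← Submodule.topologicalClosure_coe]; exact this
  rw [Metric.mem_closure_iff] at hx
  obtain ⟨v, hv, hdist⟩ := hx δ hδ
  have key : ∀ v ∈ Submodule.span ℂ S, ∃ A ∈ M.meas, IsBoundedSet 𝓔 A ∧ M.proj A v = v := by
    intro v hv
    induction hv using Submodule.span_induction with
    | mem w hw =>
        obtain ⟨A, hA, hAE, u, rfl⟩ := hw
        refine ⟨A, hA, ⟨E, hE, hAE⟩, ?_⟩
        have := M.proj_idem A hA
        calc M.proj A (M.proj A u) = (M.proj A * M.proj A) u := rfl
          _ = M.proj A u := by rw [this]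
    | zero =>
        refine ⟨∅, ?_, bounded_empty', map_zero _⟩
        have := M.compl_mem M.univ_mem
        rwa [Set.compl_univ] at this
    | add v w _ _ ihv ihw =>
        obtain ⟨Av, hAv, hAvb, hv⟩ := ihv
        obtain ⟨Aw, hAw, hAwb, hw⟩ := ihw
        refine ⟨Av ∪ Aw, meas_union' M hAv hAw, bounded_union' hconn hAvb hAwb, ?_⟩
        rw [map_add, proj_absorb' M hAv (meas_union' M hAv hAw) Set.subset_union_left hv,
          proj_absorb' M hAw (meas_union' M hAv hAw) Set.subset_union_right hw]
    | smul c v _ ih =>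
        obtain ⟨A, hA, hAb, hv⟩ := ih
        exact ⟨A, hA, hAb, by rw [map_smul, hv]⟩
  obtain ⟨A, hA, hAb, hvA⟩ := key v hv
  refine ⟨A, hA, hAb, ?_⟩
  have heq : x - M.proj A x = (1 - M.proj A) (x - v) := by
    simp [map_sub, hvA, sub_sub_sub_comm]
  calc ‖x - M.proj A x‖ = ‖(1 - M.proj A) (x - v)‖ := by rw [heq]
    _ ≤ ‖x - v‖ := one_sub_proj_norm_le' M hA _
    _ < δ := by rwa [← dist_eq_norm]

lemma approx_superset' (M : CoarseModule 𝓔 HX)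
    (hconn : ∀ s : Set X, s.Finite → IsBoundedSet 𝓔 s)
    {A : Set X} (hA : A ∈ M.meas) (hAb : IsBoundedSet 𝓔 A)
    (x : HX) {δ : ℝ} (hδ : 0 < δ) :
    ∃ A' ∈ M.meas, IsBoundedSet 𝓔 A' ∧ A ⊆ A' ∧ ‖(1 - M.proj A') x‖ < δ := by
  obtain ⟨A₀, hA₀, hA₀b, hx⟩ := approx' M hconn x hδ
  refine ⟨A ∪ A₀, meas_union' M hA hA₀, bounded_union' hconn hAb hA₀b,
    Set.subset_union_left, ?_⟩
  calc ‖(1 - M.proj (A ∪ A₀)) x‖ ≤ ‖(1 - M.proj A₀) x‖ :=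
        proj_mono_norm' M hA₀ (meas_union' M hA hA₀) Set.subset_union_right x
    _ < δ := by
        have : (1 - M.proj A₀) x = x - M.proj A₀ x := by simp
        rwa [this]

lemma approx_finset' {ι : Type*} (M : CoarseModule 𝓔 HX)
    (hconn : ∀ s : Set X, s.Finite → IsBoundedSet 𝓔 s)
    (s : Finset ι) (f : ι → HX) {δ : ℝ} (hδ : 0 < δ)
    {A : Set X} (hA : A ∈ M.meas) (hAb : IsBoundedSet 𝓔 A) :
    ∃ A' ∈ M.meas, IsBoundedSet 𝓔 A' ∧ A ⊆ A' ∧ ∀ i ∈ s, ‖(1 - M.proj A') (f i)‖ < δ := by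
  classical
  induction s using Finset.induction with
  | empty => exact ⟨A, hA, hAb, subset_rfl, by simp⟩
  | insert a s hi ih =>
      obtain ⟨A', hA', hA'b, hsub, hall⟩ := ih
      obtain ⟨A'', hA'', hA''b, hsub', hx⟩ := approx_superset' M hconn hA' hA'b (f _) hδ
      refine ⟨A'', hA'', hA''b, hsub.trans hsub', ?_⟩
      intro j hj
      rcases Finset.mem_insert.mp hj with rfl | hj
      · exact hx
      · exact lt_of_le_of_lt (proj_mono_norm' M hA' hA'' hsub' (f j)) (hall j hj)


/-- Let `X` be coarsely connected with module `H_X`, `B ⊆ Y` measurable, and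
`K ≤ χ_B(H_Y)` a finite-dimensional subspace.  If `ε > 0` is such that for every bounded
measurable `A ⊆ X` there is a unit vector `w ∈ χ_B(H_Y)` with `‖(1 − χ_A) T* w‖ > ε`,
then for every bounded measurable `A` there is a unit vector `w̄ ∈ χ_B(H_Y) ∩ K^⊥` with
`‖(1 − χ_A) T* w̄‖ > ε/2`. -/
theorem stmt17 (MX : CoarseModule 𝓔 HX) (MY : CoarseModule 𝓕 HY)
    (hconn : ∀ s : Set X, s.Finite → IsBoundedSet 𝓔 s)
    (T : HX →L[ℂ] HY)
    (B : Set Y) (hB : B ∈ MY.meas)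
    (K : Submodule ℂ HY) [FiniteDimensional ℂ K]
    (hK : ∀ w ∈ K, MY.proj B w = w)
    (ε : ℝ) (hε : 0 < ε)
    (hyp : ∀ A ∈ MX.meas, IsBoundedSet 𝓔 A →
      ∃ w : HY, ‖w‖ = 1 ∧ MY.proj B w = w ∧
        ε < ‖(1 - MX.proj A) ((ContinuousLinearMap.adjoint T) w)‖) :
    ∀ A ∈ MX.meas, IsBoundedSet 𝓔 A →
      ∃ w : HY, ‖w‖ = 1 ∧ MY.proj B w = w ∧ (∀ u ∈ K, inner (𝕜 := ℂ) u w = 0) ∧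
        ε / 2 < ‖(1 - MX.proj A) ((ContinuousLinearMap.adjoint T) w)‖ := by
  intro A hA hAb
  classical
  set T' := ContinuousLinearMap.adjoint T with hT'
  set n := Module.finrank ℂ K with hn
  set b : OrthonormalBasis (Fin n) ℂ K := stdOrthonormalBasis ℂ K with hb
  have hδ : (0:ℝ) < ε / (4 * (n + 1)) := by positivity
  obtain ⟨A', hA', hA'b, hsub, hcl⟩ :=
    approx_finset' MX hconn Finset.univ (fun i : Fin n => T' (b i : HY)) hδ hA hAb
  obtain ⟨w, hw1, hwB, hwε⟩ := hyp A' hA' hA'b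
  haveI : CompleteSpace K := FiniteDimensional.complete ℂ K
  set v : HY := (K.orthogonalProjectionOnto w : HY) with hv
  have hvK : v ∈ K := (K.orthogonalProjectionOnto w).2
  -- orthogonality of w - v to K
  have horth : ∀ u ∈ K, (inner ℂ (w - v) u : ℂ) = 0 := fun u hu =>
    K.starProjection_inner_eq_zero w u hu
  have hvv : (inner ℂ v v : ℂ) = inner ℂ w v := by
    have h0 := horth v hvK
    rw [inner_sub_left] at h0
    linear_combination -h0
  have hvn : ‖v‖ ≤ 1 := by
    calc ‖v‖ ≤ ‖w‖ := aux_norm_le' hvv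
      _ = 1 := hw1
  have hwv : (inner ℂ (w - v) (w - v) : ℂ) = inner ℂ w (w - v) := by
    have h0 : (inner ℂ v (w - v) : ℂ) = 0 := by
      rw [← inner_conj_symm, horth v hvK]; simp
    rw [inner_sub_left, h0]; ring
  have hwvn : ‖w - v‖ ≤ 1 := by
    calc ‖w - v‖ ≤ ‖w‖ := aux_norm_le' hwv
      _ = 1 := hw1
  -- key estimate on the K-part
  set L : HY →L[ℂ] HX := (1 - MX.proj A') ∘L T' with hL
  have hLv : ‖L v‖ ≤ ε / 4 := by
    have hrep : v = ∑ i : Fin n, b.repr (K.orthogonalProjectionOnto w) i • (b i : HY) := by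
      conv_lhs => rw [hv, ← b.sum_repr (K.orthogonalProjectionOnto w)]
      push_cast [Submodule.coe_sum, Submodule.coe_smul]
      rfl
    have hLsum : L v = ∑ i : Fin n, b.repr (K.orthogonalProjectionOnto w) i • L (b i : HY) := by
      rw [hrep, map_sum]
      simp [map_smul]
    rw [hLsum]
    have hcoef : ∀ i : Fin n, ‖b.repr (K.orthogonalProjectionOnto w) i‖ ≤ 1 := by
      intro i
      rw [b.repr_apply_apply]
      calc ‖(inner ℂ (b i) (K.orthogonalProjectionOnto w) : ℂ)‖
          ≤ ‖b i‖ * ‖K.orthogonalProjectionOnto w‖ := norm_inner_le_norm _ _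
        _ = ‖v‖ := by rw [b.orthonormal.1 i, one_mul]; rfl
        _ ≤ 1 := hvn
    calc ‖∑ i : Fin n, b.repr (K.orthogonalProjectionOnto w) i • L (b i : HY)‖
        ≤ ∑ i : Fin n, ‖b.repr (K.orthogonalProjectionOnto w) i • L (b i : HY)‖ :=
          norm_sum_le _ _
      _ ≤ ∑ _i : Fin n, ε / (4 * (n + 1)) := by
          apply Finset.sum_le_sum
          intro i _
          rw [norm_smul]
          calc ‖b.repr (K.orthogonalProjectionOnto w) i‖ * ‖L (b i : HY)‖
              ≤ 1 * (ε / (4 * (n + 1))) := by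
                apply mul_le_mul (hcoef i) (le_of_lt (hcl i (Finset.mem_univ i)))
                  (norm_nonneg _) zero_le_one
            _ = ε / (4 * (n + 1)) := one_mul _
      _ = n * (ε / (4 * (n + 1))) := by rw [Finset.sum_const, Finset.card_univ,
          Fintype.card_fin, nsmul_eq_mul]
      _ ≤ ε / 4 := by
          have h1 : (0:ℝ) ≤ (n:ℝ) := Nat.cast_nonneg n
          rw [← mul_div_assoc, div_le_div_iff₀ (by positivity) (by norm_num : (0:ℝ) < 4)]
          nlinarith
  -- the vector w' := w - v
  set w' : HY := w - v with hw'
  have hw'B : MY.proj B w' = w' := by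
    rw [hw', map_sub, hwB, hK v hvK]
  have hLw' : ε - ε / 4 < ‖L w'‖ := by
    have h1 : L w' + L v = L w := by rw [hw', ← map_add, sub_add_cancel]
    have h2 := norm_add_le (L w') (L v)
    rw [h1] at h2
    have h3 : ε < ‖L w‖ := hwε
    linarith
  have hAbound : ε - ε / 4 < ‖(1 - MX.proj A) (T' w')‖ := by
    calc ε - ε / 4 < ‖L w'‖ := hLw'
      _ = ‖(1 - MX.proj A') (T' w')‖ := rfl
      _ ≤ ‖(1 - MX.proj A) (T' w')‖ := proj_mono_norm' MX hA hA' hsub (T' w')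
  have hw'ne : w' ≠ 0 := by
    intro h
    rw [h] at hAbound
    simp at hAbound
    linarith
  have hw'pos : 0 < ‖w'‖ := norm_pos_iff.mpr hw'ne
  refine ⟨(‖w'‖ : ℂ)⁻¹ • w', ?_, ?_, ?_, ?_⟩
  · rw [norm_smul, norm_inv, Complex.norm_real, Real.norm_eq_abs,
      abs_of_pos hw'pos, inv_mul_cancel₀ (ne_of_gt hw'pos)]
  · rw [map_smul, hw'B]
  · intro u hu
    rw [inner_smul_right]
    have : (inner ℂ u w' : ℂ) = 0 := by
      rw [← inner_conj_symm, horth u hu]; simp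
    rw [this, mul_zero]
  · rw [map_smul, map_smul, norm_smul, norm_inv, Complex.norm_real,
      Real.norm_eq_abs, abs_of_pos hw'pos]
    have hinv : (1:ℝ) ≤ ‖w'‖⁻¹ := by
      have h := mul_le_mul_of_nonneg_left hwvn (le_of_lt (inv_pos.mpr hw'pos))
      rw [inv_mul_cancel₀ (ne_of_gt hw'pos), mul_one] at h
      exact h
    calc ε / 2 < ε - ε / 4 := by linarith
      _ < ‖(1 - MX.proj A) (T' w')‖ := hAbound
      _ ≤ ‖w'‖⁻¹ * ‖(1 - MX.proj A) (T' w')‖ :=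
          le_mul_of_one_le_left (norm_nonneg _) hinv
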